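/- The map Ψ defined by Ψ(1^{m_0} 2^{n_0} ⋯ 1^{m_d} 2^{n_d}) = 1^{m_0} 2 1^{m_1−1} 2 ⋯ 2 1^{m_d−1} 2^{n_0−1} 1 2^{n_1−1} ⋯ 2^{n_{d−1}−1} 1 2^{n_d} is a bijection from the set of binary words of length n with k ones to itself, for every n and k. -/

import Mathlib

/-- Count the leading letters of a list equal to `a`; return the count and the rest. -/
def leadCount (a : ℕ) : List ℕ → ℕ × List ℕ
  | [] => (0, [])
  | b :: rest =>
    if b = a then
      let p := leadCount a rest
      (p.1 + 1, p.2)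
    else (0, b :: rest)

def blocksAux : ℕ → List ℕ → List (ℕ × ℕ)
  | 0, _ => []
  | _, [] => []
  | fuel + 1, w =>
    let p := leadCount 1 w
    let q := leadCount 2 p.2
    (p.1, q.1) :: blocksAux fuel q.2

/-- The descent-block decomposition `[(m₀,n₀),…,(m_d,n_d)]` of a binary word
`1^{m₀} 2^{n₀} ⋯ 1^{m_d} 2^{n_d}`. -/
def blocks (w : List ℕ) : List (ℕ × ℕ) := blocksAux w.length w

/-- The word `1^{m₀} 2^{n₀} ⋯ 1^{m_d} 2^{n_d}` determined by blocks. -/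
def blockWord (bs : List (ℕ × ℕ)) : List ℕ :=
  bs.flatMap fun p => List.replicate p.1 1 ++ List.replicate p.2 2

/-- `[(m₀,n₀),…,(m_d,n_d)]` is a valid descent-block decomposition:
`m_i > 0` for `1 ≤ i ≤ d` and `n_j > 0` for `0 ≤ j ≤ d-1`. -/
def ValidBlocks (bs : List (ℕ × ℕ)) : Prop :=
  bs ≠ [] ∧ (∀ p ∈ bs.tail, 0 < p.1) ∧ (∀ p ∈ bs.dropLast, 0 < p.2)

/-- A word on the alphabet {1,2}. -/
def IsBinary (w : List ℕ) : Prop := ∀ a ∈ w, a = 1 ∨ a = 2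

/-- The descent number of a word. -/
def des (w : List ℕ) : ℕ := (w.zip w.tail).countP fun p => decide (p.2 < p.1)

/-- The excedance number of a binary word with `k` ones: the number of
positions `i ≤ k` carrying the letter 2. -/
def exc (w : List ℕ) : ℕ := (w.take (w.count 1)).count 2

/-- `Ψ = Φ₁⁻¹` on binary words, via the descent-block decomposition. -/
def psiBlocks (bs : List (ℕ × ℕ)) : List ℕ :=
  List.replicate (bs.headD (0,0)).1 1
    ++ bs.tail.flatMap (fun p => 2 :: List.replicate (p.1 - 1) 1)
    ++ bs.dropLast.flatMap (fun p => List.replicate (p.2 - 1) 2 ++ [1])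
    ++ List.replicate (bs.getLastD (0,0)).2 2

def Psi (w : List ℕ) : List ℕ := psiBlocks (blocks w)

/-- Foata's second fundamental transformation on binary words. -/
def phi2Blocks (bs : List (ℕ × ℕ)) : List ℕ :=
  bs.tail.reverse.flatMap (fun p => List.replicate (p.1 - 1) 1 ++ [2])
    ++ List.replicate (bs.headD (0,0)).1 1
    ++ bs.dropLast.flatMap (fun p => List.replicate (p.2 - 1) 2 ++ [1])
    ++ List.replicate (bs.getLastD (0,0)).2 2

def Phi2 (w : List ℕ) : List ℕ := phi2Blocks (blocks w)

/-- The extended Steingrímsson map `Γ` on binary words. -/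
def gammaBlocks (bs : List (ℕ × ℕ)) : List ℕ :=
  match bs with
  | [] => []
  | [(m0, n0)] => List.replicate m0 1 ++ List.replicate n0 2
  | (m0, n0) :: rest =>
      List.replicate m0 1
        ++ rest.dropLast.flatMap (fun p => 2 :: List.replicate (p.1 - 1) 1)
        ++ (2 :: List.replicate (rest.getLastD (0,0)).1 1)
        ++ (let ns := n0 :: rest.map Prod.snd
            ns.dropLast.dropLast.flatMap (fun nj => List.replicate (nj - 1) 2 ++ [1])
              ++ List.replicate (ns.dropLast.getLastD 0 - 1 + ns.getLastD 0) 2)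

def Gamma (w : List ℕ) : List ℕ := gammaBlocks (blocks w)

/-- The involution `φ` on binary words. -/
def phi (w : List ℕ) : List ℕ :=
  let bs := blocks w
  let ns := bs.map Prod.snd
  let newms : List ℕ :=
    match (bs.map Prod.fst).reverse with
    | [] => []
    | [a] => [a]
    | a :: rest => (a - 1) :: (rest.dropLast ++ [rest.getLastD 0 + 1])
  blockWord (newms.zip ns)

/-- Fibonacci words: binary words with no two consecutive ones. -/
def IsFib (w : List ℕ) : Prop :=
  IsBinary w ∧ w.Chain' fun a b => ¬(a = 1 ∧ b = 1)

def FibSet (n : ℕ) : Set (List ℕ) := {w | IsFib w ∧ w.length = n}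

/-- Fibonacci words of length `n` ending with the letter 1. -/
def FibSet' (n : ℕ) : Set (List ℕ) :=
  {w | IsFib w ∧ w.length = n ∧ w.getLast? = some 1}

/-- Binary words of length `n` with no two consecutive twos. -/
def GSet (n : ℕ) : Set (List ℕ) :=
  {w | IsBinary w ∧ w.length = n ∧ w.Chain' fun a b => ¬(a = 2 ∧ b = 2)}

/-- The word `1^{m₀} 2^{d+n₀-1} 1 2^{n₁-1} ⋯ 1 2^{n_{d-1}-1} 1 2^{n_d}`. -/
def Rword (m0 : ℕ) (ns : List ℕ) : List ℕ :=
  match ns with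
  | [] => List.replicate m0 1
  | [n0] => List.replicate m0 1 ++ List.replicate n0 2
  | n0 :: rest =>
      List.replicate m0 1 ++ List.replicate (rest.length + n0 - 1) 2
        ++ rest.dropLast.flatMap (fun nj => 1 :: List.replicate (nj - 1) 2)
        ++ (1 :: List.replicate (rest.getLastD 0) 2)

def RSet (n : ℕ) : Set (List ℕ) :=
  {w | ∃ m0 ns, m0 ≤ 1 ∧ ns ≠ [] ∧ (∀ j ∈ List.dropLast ns, 1 ≤ j) ∧
        w = Rword m0 ns ∧ w.length = n}

/-- The Fibonacci word `1^{m₀} 2^{n₀} 1 2^{n₁} ⋯ 1 2^{n_d}`. -/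
def Fword (m0 : ℕ) (ns : List ℕ) : List ℕ :=
  List.replicate m0 1 ++ List.replicate (ns.headD 0) 2
    ++ ns.tail.flatMap fun nj => 1 :: List.replicate nj 2

lemma leadCount_eq (a : ℕ) : ∀ l : List ℕ,
    l = List.replicate (leadCount a l).1 a ++ (leadCount a l).2
  | [] => rfl
  | b :: rest => by
    by_cases h : b = a
    · simp only [leadCount, if_pos h, List.replicate_succ, List.cons_append]
      rw [← leadCount_eq a rest]; rw [h]
    · simp [leadCount, h]

lemma leadCount_snd_ne (a : ℕ) (l : List ℕ) : (leadCount a l).2.head? ≠ some a := by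
  induction l with
  | nil => simp [leadCount]
  | cons b rest ih =>
    by_cases h : b = a
    · simpa [leadCount, h] using ih
    · simp [leadCount, h]

lemma leadCount_snd_length_le (a : ℕ) : ∀ l : List ℕ, (leadCount a l).2.length ≤ l.length
  | [] => le_refl _
  | b :: rest => by
    by_cases h : b = a
    · simp only [leadCount, if_pos h]
      exact le_trans (leadCount_snd_length_le a rest) (by simp)
    · simp [leadCount, h]

lemma leadCount_of_head_ne (a : ℕ) (l : List ℕ) (h : l.head? ≠ some a) :
    leadCount a l = (0, l) := by
  cases l with
  | nil => rfl
  | cons b rest =>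
    simp only [List.head?_cons, ne_eq, Option.some.injEq] at h
    simp [leadCount, h]

lemma leadCount_replicate_append (a t : ℕ) (r : List ℕ) (h : r.head? ≠ some a) :
    leadCount a (List.replicate t a ++ r) = (t, r) := by
  induction t with
  | zero => simpa using leadCount_of_head_ne a r h
  | succ t ih => simp [List.replicate_succ, leadCount, ih]

lemma blocksAux_spec : ∀ fuel (w : List ℕ), IsBinary w → w.length ≤ fuel →
    blockWord (blocksAux fuel w) = w ∧
    (∀ p ∈ (blocksAux fuel w).tail, 0 < p.1) ∧
    (∀ p ∈ (blocksAux fuel w).dropLast, 0 < p.2) ∧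
    (w ≠ [] → blocksAux fuel w ≠ []) ∧
    (w.head? ≠ some 2 → ∀ p ∈ blocksAux fuel w, 0 < p.1) := by
  intro fuel
  induction fuel with
  | zero =>
    intro w _ hlen
    have : w = [] := List.length_eq_zero_iff.mp (Nat.le_zero.mp hlen)
    subst this
    simp [blocksAux, blockWord]
  | succ fuel ih =>
    intro w hbin hlen
    cases hw : w with
    | nil => subst hw; simp [blocksAux, blockWord]
    | cons b rest =>
      subst hw
      set p := leadCount 1 (b :: rest) with hp
      set q := leadCount 2 p.2 with hq
      have hbs : blocksAux (fuel + 1) (b :: rest) = (p.1, q.1) :: blocksAux fuel q.2 := rfl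
      have hw1 : (b :: rest : List ℕ) = List.replicate p.1 1 ++ p.2 := leadCount_eq 1 _
      have hw2 : p.2 = List.replicate q.1 2 ++ q.2 := leadCount_eq 2 _
      -- q.2 is binary
      have hsub : ∀ a ∈ q.2, a ∈ (b :: rest : List ℕ) := by
        intro a ha
        rw [hw1, hw2]; simp [ha]
      have hbin2 : IsBinary q.2 := fun a ha => hbin a (hsub a ha)
      -- head of q.2 is not 2
      have hq2h : q.2.head? ≠ some 2 := leadCount_snd_ne 2 p.2
      -- head of p.2 is not 1
      have hp2h : p.2.head? ≠ some 1 := leadCount_snd_ne 1 (b :: rest)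
      -- p.1 + q.1 > 0
      have hpos : 0 < p.1 + q.1 := by
        rcases hbin b (by simp) with hb | hb
        · have : 0 < p.1 := by
            rw [hp]; subst hb; simp [leadCount]
          omega
        · have hp0 : p = (0, b :: rest) := by
            rw [hp]; apply leadCount_of_head_ne; subst hb; simp
          have : 0 < q.1 := by
            rw [hq, hp0]; subst hb; simp [leadCount]
          omega
      -- length accounting
      have hlen1 : (b :: rest).length = p.1 + p.2.length := by
        conv_lhs => rw [hw1]
        simp
      have hlen2 : p.2.length = q.1 + q.2.length := by
        conv_lhs => rw [hw2]
        simp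
      have hlen3 : q.2.length ≤ fuel := by
        rw [hlen1, hlen2] at hlen; omega
      obtain ⟨IH1, IH2, IH3, IH4, IH5⟩ := ih q.2 hbin2 hlen3
      -- if q.2 nonempty then p.2 nonempty hence q.1 > 0
      have hq1pos : q.2 ≠ [] → 0 < q.1 := by
        intro hne
        by_contra hq0
        have hq0 : q.1 = 0 := by omega
        have hp2ne : p.2 ≠ [] := by
          rw [hw2, hq0]; simpa using hne
        rcases List.exists_cons_of_ne_nil hp2ne with ⟨c, cs, hc⟩
        have : c = 1 ∨ c = 2 := by
          apply hbin; rw [hw1, hc]; simp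
        rcases this with h1 | h2
        · rw [hc, h1] at hp2h; simp at hp2h
        · have : 0 < q.1 := by rw [hq, hc, h2]; simp [leadCount]
          omega
      refine ⟨?_, ?_, ?_, ?_, ?_⟩
      · rw [hbs]
        show (List.replicate p.1 1 ++ List.replicate q.1 2) ++ blockWord (blocksAux fuel q.2)
            = b :: rest
        rw [IH1, List.append_assoc, ← hw2, ← hw1]
      · rw [hbs]
        intro x hx
        exact IH5 hq2h x hx
      · rw [hbs]
        intro x hx
        rcases hqe : blocksAux fuel q.2 with _ | ⟨y, ys⟩
        · rw [hqe] at hx; simp at hx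
        · rw [hqe, List.dropLast_cons₂] at hx
          have hq2ne : q.2 ≠ [] := by
            intro hnil
            rw [hnil] at hqe
            cases fuel <;> simp [blocksAux] at hqe
          rcases List.mem_cons.mp hx with h | h
          · subst h; exact hq1pos hq2ne
          · exact IH3 x (by rw [hqe]; exact h)
      · intro _; rw [hbs]; simp
      · intro hhd x hx
        rw [hbs] at hx
        rcases List.mem_cons.mp hx with h | h
        · subst h
          show 0 < p.1
          rcases hbin b (by simp) with hb | hb
          · rw [hp]; subst hb; simp [leadCount]
          · exact absurd (by subst hb; rfl) hhd
        · exact IH5 hq2h x h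

-- generic helpers
lemma count_flatMap {α : Type} (a : ℕ) (l : List α) (f : α → List ℕ) :
    (l.flatMap f).count a = (l.map fun x => (f x).count a).sum := by
  induction l with
  | nil => simp
  | cons x xs ih => simp [List.flatMap_cons, List.count_append, ih]

lemma sum_map_sub_one {α : Type} (l : List α) (f : α → ℕ) (h : ∀ x ∈ l, 0 < f x) :
    (l.map fun x => f x - 1).sum + l.length = (l.map f).sum := by
  induction l with
  | nil => simp
  | cons x xs ih =>
    have h1 := h x (by simp)
    have h2 := ih fun y hy => h y (by simp [hy])
    simp only [List.map_cons, List.sum_cons, List.length_cons]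
    omega

lemma count1_blockWord (bs : List (ℕ × ℕ)) :
    (blockWord bs).count 1 = (bs.map Prod.fst).sum := by
  induction bs with
  | nil => simp [blockWord]
  | cons p t ih =>
    simp [blockWord, List.flatMap_cons, List.count_append, List.count_replicate] at ih ⊢
    omega

lemma count2_blockWord (bs : List (ℕ × ℕ)) :
    (blockWord bs).count 2 = (bs.map Prod.snd).sum := by
  induction bs with
  | nil => simp [blockWord]
  | cons p t ih =>
    simp [blockWord, List.flatMap_cons, List.count_append, List.count_replicate] at ih ⊢
    omega

lemma length_blockWord (bs : List (ℕ × ℕ)) :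
    (blockWord bs).length = (bs.map Prod.fst).sum + (bs.map Prod.snd).sum := by
  induction bs with
  | nil => simp [blockWord]
  | cons p t ih =>
    simp [blockWord, List.flatMap_cons] at ih ⊢
    omega

-- decompositions of bs
lemma sum_map_eq_head_add {α : Type} (bs : List α) (hne : bs ≠ []) (f : α → ℕ) (d : α) :
    (bs.map f).sum = f (bs.headD d) + (bs.tail.map f).sum := by
  cases bs with
  | nil => simp at hne
  | cons x xs => simp

lemma sum_map_eq_dropLast_add {α : Type} (bs : List α) (hne : bs ≠ []) (f : α → ℕ) (d : α) :
    (bs.map f).sum = (bs.dropLast.map f).sum + f (bs.getLastD d) := by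
  conv_lhs => rw [← List.dropLast_append_getLast hne]
  rw [List.getLastD_eq_getLast?, List.getLast?_eq_some_getLast hne]
  simp

lemma length_tail_eq (bs : List (ℕ × ℕ)) : bs.tail.length = bs.dropLast.length := by
  cases bs <;> simp

lemma F1_count1 (l : List (ℕ × ℕ)) (h : ∀ p ∈ l, 0 < p.1) :
    (l.flatMap fun p => 2 :: List.replicate (p.1 - 1) 1).count 1 + l.length
      = (l.map Prod.fst).sum := by
  induction l with
  | nil => simp
  | cons x xs ih =>
    have h1 := h x (by simp)
    have h2 := ih fun y hy => h y (by simp [hy])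
    simp only [List.flatMap_cons, List.count_append, List.count_cons, List.count_replicate,
      List.map_cons, List.sum_cons, List.length_cons] at h2 ⊢
    simp only [show ((1:ℕ) == 2) = false by rfl, show ((1:ℕ) == 1) = true by rfl] at h2 ⊢
    simp at h2 ⊢
    omega

lemma F1_count2 (l : List (ℕ × ℕ)) :
    (l.flatMap fun p => 2 :: List.replicate (p.1 - 1) 1).count 2 = l.length := by
  induction l with
  | nil => simp
  | cons x xs ih =>
    simp only [List.flatMap_cons, List.count_append, List.count_cons, List.count_replicate,
      List.length_cons] at ih ⊢
    simp at ih ⊢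
    omega

lemma F1_length (l : List (ℕ × ℕ)) (h : ∀ p ∈ l, 0 < p.1) :
    (l.flatMap fun p => 2 :: List.replicate (p.1 - 1) 1).length = (l.map Prod.fst).sum := by
  induction l with
  | nil => simp
  | cons x xs ih =>
    have h1 := h x (by simp)
    have h2 := ih fun y hy => h y (by simp [hy])
    simp only [List.flatMap_cons, List.length_append, List.length_cons, List.length_replicate,
      List.map_cons, List.sum_cons] at h2 ⊢
    omega

lemma F2_count1 (l : List (ℕ × ℕ)) :
    (l.flatMap fun p => List.replicate (p.2 - 1) 2 ++ [1]).count 1 = l.length := by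
  induction l with
  | nil => simp
  | cons x xs ih =>
    simp only [List.flatMap_cons, List.count_append, List.count_replicate,
      List.length_cons] at ih ⊢
    simp at ih ⊢
    omega

lemma F2_count2 (l : List (ℕ × ℕ)) (h : ∀ p ∈ l, 0 < p.2) :
    (l.flatMap fun p => List.replicate (p.2 - 1) 2 ++ [1]).count 2 + l.length
      = (l.map Prod.snd).sum := by
  induction l with
  | nil => simp
  | cons x xs ih =>
    have h1 := h x (by simp)
    have h2 := ih fun y hy => h y (by simp [hy])
    simp only [List.flatMap_cons, List.count_append, List.count_replicate,
      List.map_cons, List.sum_cons, List.length_cons] at h2 ⊢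
    have e0 : List.count 2 [1] = 0 := by simp
    rw [e0, if_pos (by rfl)]
    omega

lemma F2_length (l : List (ℕ × ℕ)) (h : ∀ p ∈ l, 0 < p.2) :
    (l.flatMap fun p => List.replicate (p.2 - 1) 2 ++ [1]).length = (l.map Prod.snd).sum := by
  induction l with
  | nil => simp
  | cons x xs ih =>
    have h1 := h x (by simp)
    have h2 := ih fun y hy => h y (by simp [hy])
    simp only [List.flatMap_cons, List.length_append, List.length_cons, List.length_replicate,
      List.length_nil, List.map_cons, List.sum_cons] at h2 ⊢
    omega

lemma count1_psiBlocks (bs : List (ℕ × ℕ)) (hv : ValidBlocks bs) :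
    (psiBlocks bs).count 1 = (bs.map Prod.fst).sum := by
  obtain ⟨hne, htail, hdrop⟩ := hv
  rw [psiBlocks, List.count_append, List.count_append, List.count_append]
  have c1 : (List.replicate (bs.headD (0,0)).1 1).count 1 = (bs.headD (0,0)).1 := by simp
  have c4 : (List.replicate (bs.getLastD (0,0)).2 2).count 1 = 0 := by
    simp [List.count_replicate]
  rw [c1, c4, F2_count1]
  have e1 := F1_count1 bs.tail htail
  have e4 := sum_map_eq_head_add bs hne Prod.fst (0,0)
  have e5 := length_tail_eq bs
  omega

lemma count2_psiBlocks (bs : List (ℕ × ℕ)) (hv : ValidBlocks bs) :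
    (psiBlocks bs).count 2 = (bs.map Prod.snd).sum := by
  obtain ⟨hne, htail, hdrop⟩ := hv
  rw [psiBlocks, List.count_append, List.count_append, List.count_append]
  have c1 : (List.replicate (bs.headD (0,0)).1 1).count 2 = 0 := by
    simp [List.count_replicate]
  have c4 : (List.replicate (bs.getLastD (0,0)).2 2).count 2 = (bs.getLastD (0,0)).2 := by
    simp
  rw [c1, c4, F1_count2]
  have e1 := F2_count2 bs.dropLast hdrop
  have e4 := sum_map_eq_dropLast_add bs hne Prod.snd (0,0)
  have e5 := length_tail_eq bs
  omega

lemma length_psiBlocks (bs : List (ℕ × ℕ)) (hv : ValidBlocks bs) :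
    (psiBlocks bs).length = (bs.map Prod.fst).sum + (bs.map Prod.snd).sum := by
  obtain ⟨hne, htail, hdrop⟩ := hv
  rw [psiBlocks, List.length_append, List.length_append, List.length_append,
    List.length_replicate, List.length_replicate, F1_length bs.tail htail,
    F2_length bs.dropLast hdrop]
  have e4 := sum_map_eq_head_add bs hne Prod.fst (0,0)
  have e5 := sum_map_eq_dropLast_add bs hne Prod.snd (0,0)
  omega

lemma isBinary_psiBlocks (bs : List (ℕ × ℕ)) : IsBinary (psiBlocks bs) := by
  intro a ha
  rw [psiBlocks] at ha
  rcases List.mem_append.mp ha with h | h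
  · rcases List.mem_append.mp h with h | h
    · rcases List.mem_append.mp h with h | h
      · exact Or.inl (List.mem_replicate.mp h).2
      · rcases List.mem_flatMap.mp h with ⟨p, _, hp⟩
        rcases List.mem_cons.mp hp with h | h
        · exact Or.inr h
        · exact Or.inl (List.mem_replicate.mp h).2
    · rcases List.mem_flatMap.mp h with ⟨p, _, hp⟩
      rcases List.mem_append.mp hp with h | h
      · exact Or.inr (List.mem_replicate.mp h).2
      · exact Or.inl (List.mem_singleton.mp h)
  · exact Or.inr (List.mem_replicate.mp h).2

def parseTail : List ℕ → List ℕ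
  | [] => []
  | _ :: rest => ((leadCount 1 rest).1 + 1) :: parseTail (leadCount 1 rest).2
termination_by l => l.length
decreasing_by
  simp only [List.length_cons]
  exact Nat.lt_succ_of_le (leadCount_snd_length_le 1 rest)

def parseMs (a : List ℕ) : List ℕ := (leadCount 1 a).1 :: parseTail (leadCount 1 a).2

def parseNs (b : List ℕ) : List ℕ :=
  match h : (leadCount 2 b).2 with
  | [] => [(leadCount 2 b).1]
  | _ :: rest => ((leadCount 2 b).1 + 1) :: parseNs rest
termination_by b.length
decreasing_by
  have := leadCount_snd_length_le 2 b
  rw [h] at this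
  simp at this
  omega

lemma parseNs_eq_nil (b : List ℕ) (h : (leadCount 2 b).2 = []) :
    parseNs b = [(leadCount 2 b).1] := by
  rw [parseNs.eq_def]
  split
  · rfl
  · rename_i x rest h2
    rw [h] at h2; cases h2

lemma parseNs_eq_cons (b : List ℕ) (x : ℕ) (rest : List ℕ)
    (h : (leadCount 2 b).2 = x :: rest) :
    parseNs b = ((leadCount 2 b).1 + 1) :: parseNs rest := by
  rw [parseNs.eq_def]
  split
  · rename_i h2; rw [h] at h2; cases h2
  · rename_i y ys h2
    rw [h] at h2
    cases h2
    rfl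

lemma F1_head (l : List (ℕ × ℕ)) :
    (l.flatMap fun p => 2 :: List.replicate (p.1 - 1) 1).head? ≠ some 1 := by
  cases l with
  | nil => simp
  | cons x xs => simp [List.flatMap_cons]

lemma parseTail_spec (l : List (ℕ × ℕ)) (h : ∀ p ∈ l, 0 < p.1) :
    parseTail (l.flatMap fun p => 2 :: List.replicate (p.1 - 1) 1) = l.map Prod.fst := by
  induction l with
  | nil => simp [parseTail]
  | cons p t ih =>
    have h1 := h p (by simp)
    have h2 := ih fun y hy => h y (by simp [hy])
    rw [List.flatMap_cons]
    show parseTail (2 :: (List.replicate (p.1 - 1) 1 ++ _)) = _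
    rw [parseTail]
    rw [leadCount_replicate_append 1 (p.1 - 1) _ (F1_head t)]
    simp only [h2, List.map_cons]
    congr 1
    omega

lemma parseMs_spec (bs : List (ℕ × ℕ)) (hne : bs ≠ []) (htail : ∀ p ∈ bs.tail, 0 < p.1) :
    parseMs (List.replicate (bs.headD (0,0)).1 1
      ++ bs.tail.flatMap fun p => 2 :: List.replicate (p.1 - 1) 1) = bs.map Prod.fst := by
  rw [parseMs, leadCount_replicate_append 1 _ _ (F1_head bs.tail), parseTail_spec bs.tail htail]
  cases bs with
  | nil => simp at hne
  | cons x xs => simp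

lemma parseNs_spec (l : List (ℕ × ℕ)) (t : ℕ) (h : ∀ p ∈ l, 0 < p.2) :
    parseNs ((l.flatMap fun p => List.replicate (p.2 - 1) 2 ++ [1]) ++ List.replicate t 2)
      = l.map Prod.snd ++ [t] := by
  induction l with
  | nil =>
    simp only [List.flatMap_nil, List.nil_append, List.map_nil]
    have hl : leadCount 2 (List.replicate t 2) = (t, []) := by
      have := leadCount_replicate_append 2 t [] (by simp)
      simpa using this
    rw [parseNs_eq_nil _ (by rw [hl]), hl]
  | cons p tl ih =>
    have h1 := h p (by simp)
    have h2 := ih fun y hy => h y (by simp [hy])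
    rw [List.flatMap_cons]
    have hrw : ((List.replicate (p.2 - 1) 2 ++ [1]) ++ (tl.flatMap fun p => List.replicate (p.2 - 1) 2 ++ [1])) ++ List.replicate t 2
        = List.replicate (p.2 - 1) 2 ++ (1 :: ((tl.flatMap fun p => List.replicate (p.2 - 1) 2 ++ [1]) ++ List.replicate t 2)) := by
      simp [List.append_assoc]
    rw [hrw]
    have hl := leadCount_replicate_append 2 (p.2 - 1)
      (1 :: ((tl.flatMap fun p => List.replicate (p.2 - 1) 2 ++ [1]) ++ List.replicate t 2))
      (by simp)
    rw [parseNs_eq_cons _ _ _ (by rw [hl]), hl, h2]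
    simp only [List.map_cons, List.cons_append]
    congr 2
    omega

def decodeBlocks (u : List ℕ) : List (ℕ × ℕ) :=
  (parseMs (u.take (u.count 1))).zip (parseNs (u.drop (u.count 1)))

lemma map_fst_decomp (bs : List (ℕ × ℕ)) (hne : bs ≠ []) :
    bs.map Prod.fst = (bs.headD (0,0)).1 :: bs.tail.map Prod.fst := by
  cases bs with
  | nil => simp at hne
  | cons x xs => simp

lemma map_snd_decomp (bs : List (ℕ × ℕ)) (hne : bs ≠ []) :
    bs.map Prod.snd = bs.dropLast.map Prod.snd ++ [(bs.getLastD (0,0)).2] := by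
  conv_lhs => rw [← List.dropLast_append_getLast hne]
  rw [List.getLastD_eq_getLast?, List.getLast?_eq_some_getLast hne]
  simp

lemma decode_psi (bs : List (ℕ × ℕ)) (hv : ValidBlocks bs) :
    decodeBlocks (psiBlocks bs) = bs := by
  obtain ⟨hne, htail, hdrop⟩ := hv
  set A := List.replicate (bs.headD (0,0)).1 1
    ++ bs.tail.flatMap (fun p => 2 :: List.replicate (p.1 - 1) 1) with hA
  set B := bs.dropLast.flatMap (fun p => List.replicate (p.2 - 1) 2 ++ [1])
    ++ List.replicate (bs.getLastD (0,0)).2 2 with hB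
  have hAB : psiBlocks bs = A ++ B := by rw [psiBlocks, hA, hB]; simp [List.append_assoc]
  have hlenA : A.length = (bs.map Prod.fst).sum := by
    rw [hA, List.length_append, List.length_replicate, F1_length bs.tail htail,
      sum_map_eq_head_add bs hne Prod.fst (0,0)]
  have hk : (psiBlocks bs).count 1 = A.length := by
    rw [count1_psiBlocks bs ⟨hne, htail, hdrop⟩, hlenA]
  rw [decodeBlocks, hk, hAB, List.take_left, List.drop_left]
  rw [hA, parseMs_spec bs hne htail, hB, parseNs_spec bs.dropLast _ hdrop,
    ← map_snd_decomp bs hne, List.zip_map']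
  simp

lemma blocks_spec (w : List ℕ) (hb : IsBinary w) :
    blockWord (blocks w) = w ∧ (w ≠ [] → ValidBlocks (blocks w)) := by
  obtain ⟨h1, h2, h3, h4, _⟩ := blocksAux_spec w.length w hb le_rfl
  exact ⟨h1, fun hne => ⟨h4 hne, h2, h3⟩⟩

lemma Psi_nil : Psi [] = [] := by
  simp [Psi, blocks, blocksAux, psiBlocks]

theorem stmt_5 (n k : ℕ) :
    Set.BijOn Psi {w | IsBinary w ∧ w.length = n ∧ w.count 1 = k}
      {w | IsBinary w ∧ w.length = n ∧ w.count 1 = k} := by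
  set S : Set (List ℕ) := {w | IsBinary w ∧ w.length = n ∧ w.count 1 = k} with hS
  have hfin : S.Finite := by
    apply Set.Finite.subset
      (Set.Finite.image (List.map fun b : Bool => if b then 1 else 2)
        (List.finite_length_eq Bool n))
    rintro w ⟨hb, hlen, -⟩
    refine ⟨w.map (fun a => decide (a = 1)), by simpa using hlen, ?_⟩
    rw [List.map_map]
    conv_rhs => rw [← List.map_id w]
    apply List.map_congr_left
    intro a ha
    rcases hb a ha with h | h <;> simp [h]
  have hmaps : Set.MapsTo Psi S S := by
    rintro w ⟨hb, hlen, hcnt⟩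
    by_cases hw : w = []
    · subst hw
      rw [Psi_nil]
      exact ⟨hb, hlen, hcnt⟩
    · obtain ⟨hrt, hv⟩ := blocks_spec w hb
      have hv := hv hw
      refine ⟨isBinary_psiBlocks _, ?_, ?_⟩
      · rw [Psi, length_psiBlocks _ hv, ← length_blockWord, hrt]
        exact hlen
      · rw [Psi, count1_psiBlocks _ hv, ← count1_blockWord, hrt]
        exact hcnt
  have hinj : Set.InjOn Psi S := by
    rintro w1 ⟨hb1, hl1, -⟩ w2 ⟨hb2, hl2, -⟩ heq
    by_cases hw1 : w1 = []
    · subst hw1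
      simp only [List.length_nil] at hl1
      exact (List.length_eq_zero_iff.mp (hl2.trans hl1.symm)).symm
    · have hw2 : w2 ≠ [] := by
        intro h
        subst h
        simp only [List.length_nil] at hl2
        exact hw1 (List.length_eq_zero_iff.mp (hl1.trans hl2.symm))
      obtain ⟨hrt1, hv1⟩ := blocks_spec w1 hb1
      obtain ⟨hrt2, hv2⟩ := blocks_spec w2 hb2
      have hbl : blocks w1 = blocks w2 := by
        rw [← decode_psi (blocks w1) (hv1 hw1), ← decode_psi (blocks w2) (hv2 hw2)]
        show decodeBlocks (Psi w1) = decodeBlocks (Psi w2)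
        rw [heq]
      rw [← hrt1, ← hrt2, hbl]
  exact (Set.Finite.injOn_iff_bijOn_of_mapsTo hfin hmaps).mp hinj
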